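/- Let G be a finitely generated group with finite generating set X, and let H ≤ G be a subgroup of finite index d. Suppose lim_{n→∞} |H ∩ B_X(n)|/|B_X(n)| = 1/d. Then dc_X(G) ≥ dc_X(H)/d², where dc_X(H) = limsup_n |{(u,v) ∈ (H ∩ B_X(n))² : uv = vu}|/|H ∩ B_X(n)|². -/

import Mathlib

open Filter

set_option maxHeartbeats 1000000

/-- The ball of radius `n` in the word metric on `G` with respect to `X`. -/
def ball {G : Type*} [Group G] (X : Finset G) (n : ℕ) : Set G :=
  {g | ∃ l : List G, l.length ≤ n ∧ (∀ x ∈ l, x ∈ X ∨ x⁻¹ ∈ X) ∧ l.prod = g}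

/-- The degree of commutativity of `G` with respect to the finite generating set `X`. -/
noncomputable def dcX {G : Type*} [Group G] (X : Finset G) : ℝ :=
  limsup (fun n =>
    (Nat.card {p : G × G // p.1 ∈ ball X n ∧ p.2 ∈ ball X n ∧ p.1 * p.2 = p.2 * p.1} : ℝ) /
      (Nat.card (ball X n) : ℝ) ^ 2) atTop

/-- The degree of commutativity of a subgroup `H` of `G`, measured with the balls of
`(G, X)` intersected with `H`. -/
noncomputable def dcXH {G : Type*} [Group G] (X : Finset G) (H : Subgroup G) : ℝ :=
  limsup (fun n =>
    (Nat.card {p : G × G // p.1 ∈ H ∧ p.1 ∈ ball X n ∧ p.2 ∈ H ∧ p.2 ∈ ball X n ∧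
        p.1 * p.2 = p.2 * p.1} : ℝ) /
      (Nat.card {u : G // u ∈ H ∧ u ∈ ball X n} : ℝ) ^ 2) atTop

lemma one_mem_ball {G : Type*} [Group G] (X : Finset G) (n : ℕ) : (1 : G) ∈ ball X n :=
  ⟨[], by simp⟩

/-- If a finite-index subgroup `H ≤ G` of index `d` is equidistributed in the balls of
`(G, X)`, then `dc_X(G) ≥ dc_X(H) / d²`. -/
theorem dcX_ge_dcXH_div_index_sq (G : Type*) [Group G] (X : Finset G)
    (hX : Subgroup.closure (X : Set G) = ⊤)
    (H : Subgroup G) (hfi : H.FiniteIndex)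
    (hBV : Tendsto (fun n =>
        (Nat.card {u : G // u ∈ H ∧ u ∈ ball X n} : ℝ) / (Nat.card (ball X n) : ℝ))
      atTop (nhds (1 / (H.index : ℝ)))) :
    dcX X ≥ dcXH X H / (H.index : ℝ) ^ 2 := by
  classical
  set a : ℕ → ℝ := fun n =>
    (Nat.card {p : G × G // p.1 ∈ ball X n ∧ p.2 ∈ ball X n ∧ p.1 * p.2 = p.2 * p.1} : ℝ) /
      (Nat.card (ball X n) : ℝ) ^ 2 with ha
  set b : ℕ → ℝ := fun n =>
    (Nat.card {p : G × G // p.1 ∈ H ∧ p.1 ∈ ball X n ∧ p.2 ∈ H ∧ p.2 ∈ ball X n ∧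
        p.1 * p.2 = p.2 * p.1} : ℝ) /
      (Nat.card {u : G // u ∈ H ∧ u ∈ ball X n} : ℝ) ^ 2 with hb
  set r : ℕ → ℝ := fun n =>
    (Nat.card {u : G // u ∈ H ∧ u ∈ ball X n} : ℝ) / (Nat.card (ball X n) : ℝ) with hr
  have ha0 : ∀ n, 0 ≤ a n := fun n => by positivity
  have hb0 : ∀ n, 0 ≤ b n := fun n => by positivity
  have hr0 : ∀ n, 0 ≤ r n := fun n => by positivity
  -- b n ≤ 1
  have hb1 : ∀ n, b n ≤ 1 := by
    intro n
    by_cases hcS : Nat.card {u : G // u ∈ H ∧ u ∈ ball X n} = 0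
    · simp only [hb, hcS, Nat.cast_zero]
      norm_num
    · haveI : Finite {u : G // u ∈ H ∧ u ∈ ball X n} := Nat.finite_of_card_ne_zero hcS
      have hinj : Function.Injective
          (fun p : {p : G × G // p.1 ∈ H ∧ p.1 ∈ ball X n ∧ p.2 ∈ H ∧ p.2 ∈ ball X n ∧
              p.1 * p.2 = p.2 * p.1} =>
            ((⟨p.1.1, p.2.1, p.2.2.1⟩ : {u : G // u ∈ H ∧ u ∈ ball X n}),
             (⟨p.1.2, p.2.2.2.1, p.2.2.2.2.1⟩ : {u : G // u ∈ H ∧ u ∈ ball X n}))) := by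
        intro p q h
        simp only [Prod.ext_iff, Subtype.ext_iff] at h
        exact Subtype.ext (Prod.ext h.1 h.2)
      have hle := Nat.card_le_card_of_injective _ hinj
      rw [Nat.card_prod] at hle
      have hcS' : (0 : ℝ) < (Nat.card {u : G // u ∈ H ∧ u ∈ ball X n} : ℝ) := by
        exact_mod_cast Nat.pos_of_ne_zero hcS
      rw [hb, div_le_one (by positivity)]
      calc (Nat.card {p : G × G // p.1 ∈ H ∧ p.1 ∈ ball X n ∧ p.2 ∈ H ∧ p.2 ∈ ball X n ∧
              p.1 * p.2 = p.2 * p.1} : ℝ)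
          ≤ (Nat.card {u : G // u ∈ H ∧ u ∈ ball X n} : ℝ) *
              (Nat.card {u : G // u ∈ H ∧ u ∈ ball X n} : ℝ) := by exact_mod_cast hle
        _ = (Nat.card {u : G // u ∈ H ∧ u ∈ ball X n} : ℝ) ^ 2 := by ring
  -- a n ≤ 1
  have ha1 : ∀ n, a n ≤ 1 := by
    intro n
    by_cases hcB : Nat.card (ball X n) = 0
    · simp only [ha, hcB, Nat.cast_zero]
      norm_num
    · haveI : Finite (ball X n) := Nat.finite_of_card_ne_zero hcB
      have hinj : Function.Injective
          (fun p : {p : G × G // p.1 ∈ ball X n ∧ p.2 ∈ ball X n ∧ p.1 * p.2 = p.2 * p.1} =>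
            ((⟨p.1.1, p.2.1⟩ : ball X n), (⟨p.1.2, p.2.2.1⟩ : ball X n))) := by
        intro p q h
        simp only [Prod.ext_iff, Subtype.ext_iff] at h
        exact Subtype.ext (Prod.ext h.1 h.2)
      have hle := Nat.card_le_card_of_injective _ hinj
      rw [Nat.card_prod] at hle
      have hcB' : (0 : ℝ) < (Nat.card (ball X n) : ℝ) := by
        exact_mod_cast Nat.pos_of_ne_zero hcB
      rw [ha, div_le_one (by positivity)]
      calc (Nat.card {p : G × G // p.1 ∈ ball X n ∧ p.2 ∈ ball X n ∧
              p.1 * p.2 = p.2 * p.1} : ℝ)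
          ≤ (Nat.card (ball X n) : ℝ) * (Nat.card (ball X n) : ℝ) := by exact_mod_cast hle
        _ = (Nat.card (ball X n) : ℝ) ^ 2 := by ring
  -- pointwise key inequality
  have key : ∀ n, b n * r n ^ 2 ≤ a n := by
    intro n
    by_cases hcB : Nat.card (ball X n) = 0
    · have : r n = 0 := by simp only [hr, hcB, Nat.cast_zero, div_zero]
      rw [this]
      simpa using ha0 n
    · haveI hBfin : Finite (ball X n) := Nat.finite_of_card_ne_zero hcB
      have hcB' : (0 : ℝ) < (Nat.card (ball X n) : ℝ) := by
        exact_mod_cast Nat.pos_of_ne_zero hcB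
      haveI hSfin : Finite {u : G // u ∈ H ∧ u ∈ ball X n} := by
        apply Finite.of_injective (fun u : {u : G // u ∈ H ∧ u ∈ ball X n} =>
          (⟨u.1, u.2.2⟩ : ball X n))
        intro u v h
        simp only [Subtype.mk.injEq] at h
        exact Subtype.ext h
      haveI : Nonempty {u : G // u ∈ H ∧ u ∈ ball X n} :=
        ⟨⟨1, H.one_mem, one_mem_ball X n⟩⟩
      have hcS : Nat.card {u : G // u ∈ H ∧ u ∈ ball X n} ≠ 0 := Nat.card_pos.ne'
      have hcS' : (Nat.card {u : G // u ∈ H ∧ u ∈ ball X n} : ℝ) ≠ 0 := by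
        exact_mod_cast hcS
      -- commuting pairs of H inject into commuting pairs of G
      haveI : Finite {p : G × G // p.1 ∈ ball X n ∧ p.2 ∈ ball X n ∧ p.1 * p.2 = p.2 * p.1} := by
        apply Finite.of_injective
          (fun p : {p : G × G // p.1 ∈ ball X n ∧ p.2 ∈ ball X n ∧ p.1 * p.2 = p.2 * p.1} =>
            ((⟨p.1.1, p.2.1⟩ : ball X n), (⟨p.1.2, p.2.2.1⟩ : ball X n)))
        intro p q h
        simp only [Prod.ext_iff, Subtype.ext_iff] at h
        exact Subtype.ext (Prod.ext h.1 h.2)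
      have hinj : Function.Injective
          (fun p : {p : G × G // p.1 ∈ H ∧ p.1 ∈ ball X n ∧ p.2 ∈ H ∧ p.2 ∈ ball X n ∧
              p.1 * p.2 = p.2 * p.1} =>
            (⟨p.1, p.2.2.1, p.2.2.2.2.1, p.2.2.2.2.2⟩ :
              {p : G × G // p.1 ∈ ball X n ∧ p.2 ∈ ball X n ∧ p.1 * p.2 = p.2 * p.1})) := by
        intro p q h
        simp only [Subtype.mk.injEq] at h
        exact Subtype.ext h
      have hle := Nat.card_le_card_of_injective _ hinj
      have hle' : (Nat.card {p : G × G // p.1 ∈ H ∧ p.1 ∈ ball X n ∧ p.2 ∈ H ∧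
          p.2 ∈ ball X n ∧ p.1 * p.2 = p.2 * p.1} : ℝ) ≤
          (Nat.card {p : G × G // p.1 ∈ ball X n ∧ p.2 ∈ ball X n ∧
            p.1 * p.2 = p.2 * p.1} : ℝ) := by exact_mod_cast hle
      have heq : b n * r n ^ 2 =
          (Nat.card {p : G × G // p.1 ∈ H ∧ p.1 ∈ ball X n ∧ p.2 ∈ H ∧ p.2 ∈ ball X n ∧
            p.1 * p.2 = p.2 * p.1} : ℝ) / (Nat.card (ball X n) : ℝ) ^ 2 := by
        rw [hb, hr]
        field_simp
      calc b n * r n ^ 2 = _ := heq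
        _ ≤ (Nat.card {p : G × G // p.1 ∈ ball X n ∧ p.2 ∈ ball X n ∧
              p.1 * p.2 = p.2 * p.1} : ℝ) / (Nat.card (ball X n) : ℝ) ^ 2 := by gcongr
        _ = a n := rfl
  -- limsup machinery
  have hbdd : IsBoundedUnder (· ≤ ·) atTop b := isBoundedUnder_of ⟨1, hb1⟩
  have habdd : IsBoundedUnder (· ≤ ·) atTop a := isBoundedUnder_of ⟨1, ha1⟩
  have hrsq : Tendsto (fun n => r n ^ 2) atTop (nhds ((1 / (H.index : ℝ)) ^ 2)) :=
    hBV.pow 2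
  have hrdd : IsBoundedUnder (· ≤ ·) atTop (fun n => r n ^ 2) := hrsq.isBoundedUnder_le
  have hliminf : liminf (fun n => r n ^ 2) atTop = (1 / (H.index : ℝ)) ^ 2 :=
    hrsq.liminf_eq
  have h1 : limsup b atTop * ((1 / (H.index : ℝ)) ^ 2) ≤
      limsup (fun n => b n * r n ^ 2) atTop := by
    have := le_limsup_mul (f := atTop) (u := b) (v := fun n => r n ^ 2)
      (Eventually.of_forall hb0).frequently hbdd (Eventually.of_forall fun n => by positivity) hrdd
    rw [hliminf] at this
    exact this
  have hcob : IsCoboundedUnder (· ≤ ·) atTop (fun n => b n * r n ^ 2) := by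
    have : IsBoundedUnder (· ≥ ·) atTop (fun n => b n * r n ^ 2) :=
      isBoundedUnder_of ⟨0, fun n => mul_nonneg (hb0 n) (by positivity)⟩
    exact this.isCoboundedUnder_le
  have h2 : limsup (fun n => b n * r n ^ 2) atTop ≤ limsup a atTop :=
    limsup_le_limsup (Eventually.of_forall key) hcob habdd
  have hfinal : dcXH X H * ((1 / (H.index : ℝ)) ^ 2) ≤ dcX X := by
    have hdcXH : dcXH X H = limsup b atTop := rfl
    have hdcX : dcX X = limsup a atTop := rfl
    rw [hdcXH, hdcX]
    exact le_trans h1 h2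
  have : dcXH X H / (H.index : ℝ) ^ 2 = dcXH X H * ((1 / (H.index : ℝ)) ^ 2) := by
    ring
  rw [ge_iff_le, this]
  exact hfinal
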